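/- Lower bound on forests of the complete multigraph: for integers n ≥ 2 and c ≥ 1, the number a_{n,c} of forests of the complete multigraph K_{n;c} satisfies a_{n,c} ≥ c^{n−1} · n^{n−2}. -/

import Mathlib

/-- A subset `F` of the edge indices of a multigraph with endpoint map `ε` is a forest if it
contains no cycle: no `k ≥ 2` pairwise distinct vertices `v₀, …, v_{k−1}` and pairwise
distinct edges `e₀, …, e_{k−1} ∈ F` with `ε eᵢ = {vᵢ, v_{(i+1) mod k}}`. -/
def IsForest {V ι : Type*} (ε : ι → Sym2 V) (F : Finset ι) : Prop :=
  ¬ ∃ (k : ℕ) (v : Fin (k + 2) → V) (e : Fin (k + 2) → ι),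
      Function.Injective v ∧ Function.Injective e ∧
      (∀ i, e i ∈ F) ∧ ∀ i, ε (e i) = s(v i, v (i + 1))

/-- `numForests n c` is `a_{n,c}`, the number of forests of the complete multigraph
`K_{n;c}` whose edge indices are pairs of a non-diagonal unordered pair of vertices in
`Fin n` and a copy index in `Fin c`. -/
noncomputable def numForests (n c : ℕ) : ℕ :=
  {F : Finset ({ p : Sym2 (Fin n) // ¬ p.IsDiag } × Fin c) |
    IsForest (fun e => (e.1 : Sym2 (Fin n))) F}.ncard

set_option linter.unusedSectionVars false
set_option maxHeartbeats 1000000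
set_option maxHeartbeats 1000000
namespace Stmt13X
variable {V : Type*} [LinearOrder V] [DecidableEq (Sym2 V)]

def decode : List V → Finset V → List (Sym2 V)
  | [], s =>
    if h : s.Nonempty then [s(s.min' h, s.max' h)] else []
  | a :: l, s =>
    if h : (s.filter (fun v => v ∉ a :: l)).Nonempty then
      s((s.filter (fun v => v ∉ a :: l)).min' h, a) ::
        decode l (s.erase ((s.filter (fun v => v ∉ a :: l)).min' h))
    else []

def Inv (l : List V) (s : Finset V) : Prop :=
  s.card = l.length + 2 ∧ ∀ x ∈ l, x ∈ s

lemma filt_ne {l : List V} {s : Finset V} (hcard : l.length + 1 ≤ s.card) :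
    (s.filter (fun v => v ∉ l)).Nonempty := by
  rw [Finset.filter_nonempty_iff]
  by_contra h
  push_neg at h
  have hsub : s ⊆ l.toFinset := by
    intro x hx
    simpa using h x hx
  have := Finset.card_le_card hsub
  have := List.toFinset_card_le l
  omega

lemma inv_cons {a : V} {l : List V} {s : Finset V} (hI : Inv (a :: l) s) :
    (s.filter (fun v => v ∉ a :: l)).Nonempty := by
  apply filt_ne
  have := hI.1
  simp only [List.length_cons] at this ⊢
  omega

lemma decode_cons {a : V} {l : List V} {s : Finset V}
    (h : (s.filter (fun v => v ∉ a :: l)).Nonempty) :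
    decode (a :: l) s = s((s.filter (fun v => v ∉ a :: l)).min' h, a) ::
        decode l (s.erase ((s.filter (fun v => v ∉ a :: l)).min' h)) := by
  rw [decode, dif_pos h]

lemma u_mem {a : V} {l : List V} {s : Finset V}
    (h : (s.filter (fun v => v ∉ a :: l)).Nonempty) :
    (s.filter (fun v => v ∉ a :: l)).min' h ∈ s ∧
      (s.filter (fun v => v ∉ a :: l)).min' h ∉ a :: l := by
  have := Finset.min'_mem _ h
  rw [Finset.mem_filter] at this
  exact this

lemma inv_erase {a : V} {l : List V} {s : Finset V} (hI : Inv (a :: l) s)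
    (h : (s.filter (fun v => v ∉ a :: l)).Nonempty) :
    Inv l (s.erase ((s.filter (fun v => v ∉ a :: l)).min' h)) := by
  obtain ⟨hmem, hnot⟩ := u_mem h
  constructor
  · rw [Finset.card_erase_of_mem hmem, hI.1]
    simp
  · intro x hx
    rw [Finset.mem_erase]
    refine ⟨?_, hI.2 x (List.mem_cons_of_mem _ hx)⟩
    intro hxu
    exact hnot (hxu ▸ List.mem_cons_of_mem _ hx)

lemma base_nonempty {s : Finset V} (h2 : s.card = 2) : s.Nonempty :=
  Finset.card_pos.mp (by omega)

lemma base_pair {s : Finset V} (h2 : s.card = 2) :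
    s.min' (base_nonempty h2) < s.max' (base_nonempty h2) ∧
      ∀ v, v ∈ s ↔ (v = s.min' (base_nonempty h2) ∨ v = s.max' (base_nonempty h2)) := by
  set h := base_nonempty h2
  have hlt := Finset.min'_lt_max'_of_card s (h₂ := by omega)
  refine ⟨hlt, ?_⟩
  have hsub : {s.min' h, s.max' h} ⊆ s := by
    intro x hx
    rcases Finset.mem_insert.mp hx with rfl | hx
    · exact Finset.min'_mem s h
    · exact (Finset.mem_singleton.mp hx) ▸ Finset.max'_mem s h
  have hcard : ({s.min' h, s.max' h} : Finset V).card = 2 := by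
    rw [Finset.card_insert_of_notMem (by simp [hlt.ne]), Finset.card_singleton]
  have hs : s = {s.min' h, s.max' h} :=
    (Finset.eq_of_subset_of_card_le hsub (by omega)).symm
  intro v
  constructor
  · intro hv; rw [hs] at hv; simpa using hv
  · intro hv; rcases hv with rfl | rfl
    · exact Finset.min'_mem s h
    · exact Finset.max'_mem s h

lemma mem_of_mem_decode {l : List V} {s : Finset V} (hI : Inv l s) :
    ∀ e ∈ decode l s, ∀ x ∈ e, x ∈ s := by
  induction l generalizing s with
  | nil =>
    intro e he x hx
    have h : s.Nonempty := base_nonempty hI.1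
    rw [decode, dif_pos h] at he
    simp only [List.mem_singleton] at he
    subst he
    rcases Sym2.mem_iff.mp hx with rfl | rfl
    · exact Finset.min'_mem s h
    · exact Finset.max'_mem s h
  | cons a l ih =>
    intro e he x hx
    have h := inv_cons hI
    rw [decode_cons h] at he
    rcases List.mem_cons.mp he with rfl | he
    · rcases Sym2.mem_iff.mp hx with h1 | h1
      · rw [h1]; exact (u_mem h).1
      · rw [h1]; exact hI.2 a (List.mem_cons_self (a := a) (l := l))
    · exact Finset.mem_of_mem_erase (ih (inv_erase hI h) e he x hx)

lemma not_isDiag_of_mem_decode {l : List V} {s : Finset V} (hI : Inv l s) :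
    ∀ e ∈ decode l s, ¬ e.IsDiag := by
  induction l generalizing s with
  | nil =>
    intro e he
    have h : s.Nonempty := base_nonempty hI.1
    rw [decode, dif_pos h] at he
    simp only [List.mem_singleton] at he
    subst he
    rw [Sym2.mk_isDiag_iff]
    exact (base_pair hI.1).1.ne
  | cons a l ih =>
    intro e he
    have h := inv_cons hI
    rw [decode_cons h] at he
    rcases List.mem_cons.mp he with rfl | he
    · rw [Sym2.mk_isDiag_iff]
      intro hua
      apply (u_mem h).2
      rw [hua]
      exact List.mem_cons_self (a := a) (l := l)
    · exact ih (inv_erase hI h) e he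

lemma length_decode {l : List V} {s : Finset V} (hI : Inv l s) :
    (decode l s).length = l.length + 1 := by
  induction l generalizing s with
  | nil =>
    rw [decode, dif_pos (base_nonempty hI.1)]
    rfl
  | cons a l ih =>
    have h := inv_cons hI
    rw [decode_cons h, List.length_cons, ih (inv_erase hI h)]
    rfl

lemma u_not_mem_rest {a : V} {l : List V} {s : Finset V} (hI : Inv (a :: l) s)
    (h : (s.filter (fun v => v ∉ a :: l)).Nonempty) :
    ∀ e ∈ decode l (s.erase ((s.filter (fun v => v ∉ a :: l)).min' h)),
      (s.filter (fun v => v ∉ a :: l)).min' h ∉ e := by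
  intro e he hmem
  have := mem_of_mem_decode (inv_erase hI h) e he _ hmem
  exact (Finset.mem_erase.mp this).1 rfl

lemma nodup_decode {l : List V} {s : Finset V} (hI : Inv l s) :
    (decode l s).Nodup := by
  induction l generalizing s with
  | nil =>
    rw [decode, dif_pos (base_nonempty hI.1)]
    exact List.nodup_singleton _
  | cons a l ih =>
    have h := inv_cons hI
    rw [decode_cons h]
    refine List.Nodup.cons ?_ (ih (inv_erase hI h))
    intro hmem
    exact u_not_mem_rest hI h _ hmem (Sym2.mem_iff.mpr (Or.inl rfl))

lemma deg_decode {l : List V} {s : Finset V} (hI : Inv l s) (v : V) :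
    ((decode l s).toFinset.filter (fun e => v ∈ e)).card
      = if v ∈ s then l.count v + 1 else 0 := by
  induction l generalizing s with
  | nil =>
    have h : s.Nonempty := base_nonempty hI.1
    rw [decode, dif_pos h]
    obtain ⟨hlt, hiff⟩ := base_pair hI.1
    by_cases hv : v ∈ s
    · rw [if_pos hv]
      have hmem : v ∈ s(s.min' h, s.max' h) := by
        rw [Sym2.mem_iff]; exact (hiff v).mp hv
      simp [Finset.filter_singleton, hmem, List.count_nil]
    · rw [if_neg hv]
      have hmem : v ∉ s(s.min' h, s.max' h) := by
        rw [Sym2.mem_iff]; intro hc; exact hv ((hiff v).mpr hc)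
      simp [Finset.filter_singleton, hmem, List.count_nil]
  | cons a l ih =>
    have h := inv_cons hI
    set u := (s.filter (fun v => v ∉ a :: l)).min' h with hu_def
    have hI' := inv_erase hI h
    have hue : u ∉ s.erase u := by simp
    have hrest : s(u, a) ∉ (decode l (s.erase u)).toFinset := by
      rw [List.mem_toFinset]
      intro hc
      exact u_not_mem_rest hI h _ hc (Sym2.mem_iff.mpr (Or.inl rfl))
    rw [decode_cons h, List.toFinset_cons, Finset.filter_insert]
    have hacount : (a :: l).count a = l.count a + 1 := by simp [List.count_cons]
    have hu_s : u ∈ s := (u_mem h).1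
    have hu_nal : u ∉ a :: l := (u_mem h).2
    have ha_s : a ∈ s := hI.2 a (List.mem_cons_self (a := a) (l := l))
    have hua : u ≠ a := fun hc => hu_nal (hc ▸ List.mem_cons_self (a := a) (l := l))
    by_cases hv : v ∈ s
    · rw [if_pos hv]
      by_cases hvu : v = u
      · subst hvu
        rw [if_pos (Sym2.mem_iff.mpr (Or.inl rfl))]
        rw [Finset.card_insert_of_notMem (fun hc => hrest (Finset.mem_of_mem_filter _ hc))]
        rw [ih hI', if_neg hue]
        have : (a :: l).count u = 0 := List.count_eq_zero.mpr hu_nal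
        omega
      · by_cases hva : v = a
        · subst hva
          rw [if_pos (Sym2.mem_iff.mpr (Or.inr rfl))]
          rw [Finset.card_insert_of_notMem (fun hc => hrest (Finset.mem_of_mem_filter _ hc))]
          rw [ih hI', if_pos (Finset.mem_erase.mpr ⟨hvu, hv⟩)]
          omega
        · rw [if_neg (by rw [Sym2.mem_iff]; tauto)]
          rw [ih hI', if_pos (Finset.mem_erase.mpr ⟨hvu, hv⟩)]
          have : (a :: l).count v = l.count v := by
            simp [List.count_cons, fun h : v = a => hva h, Ne.symm hva]
          omega
    · rw [if_neg hv]
      have hvu : v ≠ u := fun hc => hv (hc ▸ hu_s)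
      have hva : v ≠ a := fun hc => hv (hc ▸ ha_s)
      rw [if_neg (by rw [Sym2.mem_iff]; tauto)]
      rw [ih hI', if_neg (fun hc => hv (Finset.mem_of_mem_erase hc))]


lemma cycle_edges_inj {k : ℕ} (hk : 1 ≤ k) {v : Fin (k+2) → V}
    (hv : Function.Injective v) {i j : Fin (k+2)}
    (hij : s(v i, v (i+1)) = s(v j, v (j+1))) : i = j := by
  rcases Sym2.eq_iff.mp hij with ⟨h1, h2⟩ | ⟨h1, h2⟩
  · exact hv h1
  · exfalso
    have hi : i = j + 1 := hv h1
    have hj : j = i + 1 := (hv h2).symm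
    rw [hi] at hj
    rw [add_assoc] at hj
    have h2' := left_eq_add.mp hj
    have h3 := congrArg Fin.val h2'
    simp only [Fin.add_def, Fin.val_one, Fin.val_zero] at h3
    rw [Nat.mod_eq_of_lt (by omega)] at h3
    omega

lemma one_ne_zero' {k : ℕ} : (1 : Fin (k+2)) ≠ 0 := by
  intro h
  have h2 := congrArg Fin.val h
  rw [Fin.val_one, Fin.val_zero] at h2
  omega

lemma decode_acyclic {l : List V} {s : Finset V} (hI : Inv l s) {k : ℕ} (hk : 1 ≤ k)
    (v : Fin (k+2) → V) (hv : Function.Injective v) :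
    ¬ ∀ i, s(v i, v (i+1)) ∈ decode l s := by
  induction l generalizing s with
  | nil =>
    intro hall
    have h : s.Nonempty := base_nonempty hI.1
    have h0 := hall 0
    have h1 := hall 1
    rw [decode, dif_pos h, List.mem_singleton] at h0 h1
    have : (0 : Fin (k+2)) = 1 := cycle_edges_inj hk hv (h0.trans h1.symm)
    exact one_ne_zero' this.symm
  | cons a l ih =>
    intro hall
    have h := inv_cons hI
    set u := (s.filter (fun x => x ∉ a :: l)).min' h with hu_def
    have hI' := inv_erase hI h
    by_cases hu : ∃ j, v j = u
    · obtain ⟨j, hj⟩ := hu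
      have e1 := hall j
      have e2 := hall (j - 1)
      rw [decode_cons h] at e1 e2
      have hne : s(v (j-1), v (j-1+1)) ≠ s(v j, v (j+1)) := by
        intro hc
        have := cycle_edges_inj hk hv hc
        have h10 : (1 : Fin (k+2)) = 0 := sub_eq_self.mp this
        exact one_ne_zero' h10
      have hj1 : v (j - 1 + 1) = v j := by rw [sub_add_cancel]
      -- both edges contain u = v j, rest edges don't contain u
      have hmem1 : s(v j, v (j+1)) = s(u, a) := by
        rcases List.mem_cons.mp e1 with hc | hc
        · exact hc
        · exfalso
          exact u_not_mem_rest hI h _ hc (hj ▸ Sym2.mem_iff.mpr (Or.inl rfl))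
      have hmem2 : s(v (j-1), v (j-1+1)) = s(u, a) := by
        rcases List.mem_cons.mp e2 with hc | hc
        · exact hc
        · exfalso
          apply u_not_mem_rest hI h _ hc
          rw [Sym2.mem_iff]
          right
          rw [hj1, hj]
      exact hne (hmem2.trans hmem1.symm)
    · push_neg at hu
      apply ih hI'
      intro i
      have e1 := hall i
      rw [decode_cons h] at e1
      rcases List.mem_cons.mp e1 with hc | hc
      · exfalso
        have : u ∈ s(v i, v (i+1)) := hc ▸ Sym2.mem_iff.mpr (Or.inl rfl)
        rcases Sym2.mem_iff.mp this with h1 | h1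
        · exact hu i h1.symm
        · exact hu (i+1) h1.symm
      · exact hc

lemma decode_injective {l₁ l₂ : List V} {s : Finset V} (h1 : Inv l₁ s) (h2 : Inv l₂ s)
    (hT : (decode l₁ s).toFinset = (decode l₂ s).toFinset) : l₁ = l₂ := by
  induction l₁ generalizing l₂ s with
  | nil =>
    cases l₂ with
    | nil => rfl
    | cons a₂ l₂ =>
      exfalso
      have := h1.1
      have := h2.1
      simp only [List.length_nil, List.length_cons] at *
      omega
  | cons a₁ l₁ ih =>
    cases l₂ with
    | nil =>
      exfalso
      have := h1.1
      have := h2.1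
      simp only [List.length_nil, List.length_cons] at *
      omega
    | cons a₂ l₂ =>
      have hf1 := inv_cons h1
      have hf2 := inv_cons h2
      -- leaf characterization via degrees
      have hdeg : ∀ v : V,
          ((decode (a₁ :: l₁) s).toFinset.filter (fun e => v ∈ e)).card
          = ((decode (a₂ :: l₂) s).toFinset.filter (fun e => v ∈ e)).card := by
        intro v; rw [hT]
      have hfe : s.filter (fun x => x ∉ a₁ :: l₁) = s.filter (fun x => x ∉ a₂ :: l₂) := by
        ext x
        simp only [Finset.mem_filter]
        constructor
        · rintro ⟨hxs, hxl⟩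
          refine ⟨hxs, ?_⟩
          have d1 := deg_decode h1 x
          have d2 := deg_decode h2 x
          rw [hdeg x] at d1
          rw [d2, if_pos hxs] at d1
          rw [if_pos hxs, List.count_eq_zero.mpr hxl] at d1
          intro hc
          have := List.count_pos_iff.mpr hc
          omega
        · rintro ⟨hxs, hxl⟩
          refine ⟨hxs, ?_⟩
          have d1 := deg_decode h1 x
          have d2 := deg_decode h2 x
          rw [hdeg x] at d1
          rw [d2, if_pos hxs] at d1
          rw [if_pos hxs, List.count_eq_zero.mpr hxl] at d1
          intro hc
          have := List.count_pos_iff.mpr hc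
          omega
      have hu : (s.filter (fun x => x ∉ a₁ :: l₁)).min' hf1
          = (s.filter (fun x => x ∉ a₂ :: l₂)).min' hf2 := by
        congr 1
      set u := (s.filter (fun x => x ∉ a₁ :: l₁)).min' hf1 with hu1
      -- degree of u in T₂ is 1
      have hu_s : u ∈ s := (u_mem hf1).1
      have hu_nl1 : u ∉ a₁ :: l₁ := (u_mem hf1).2
      have hu_nl2 : u ∉ a₂ :: l₂ := by
        have := (u_mem hf2).2
        rwa [← hu] at this
      have hcard1 : ((decode (a₂ :: l₂) s).toFinset.filter (fun e => u ∈ e)).card = 1 := by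
        rw [deg_decode h2 u, if_pos hu_s, List.count_eq_zero.mpr hu_nl2]
      obtain ⟨b, hb⟩ := Finset.card_eq_one.mp hcard1
      have hmem1 : s(u, a₁) ∈ (decode (a₂ :: l₂) s).toFinset := by
        rw [← hT, List.mem_toFinset, decode_cons hf1]
        exact List.mem_cons_self
      have hmem2 : s(u, a₂) ∈ (decode (a₂ :: l₂) s).toFinset := by
        rw [List.mem_toFinset, decode_cons hf2, ← hu]
        exact List.mem_cons_self
      have hb1 : s(u, a₁) ∈ ({b} : Finset (Sym2 V)) := by
        rw [← hb]; exact Finset.mem_filter.mpr ⟨hmem1, Sym2.mem_iff.mpr (Or.inl rfl)⟩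
      have hb2 : s(u, a₂) ∈ ({b} : Finset (Sym2 V)) := by
        rw [← hb]; exact Finset.mem_filter.mpr ⟨hmem2, Sym2.mem_iff.mpr (Or.inl rfl)⟩
      have heq : s(u, a₁) = s(u, a₂) :=
        (Finset.mem_singleton.mp hb1).trans (Finset.mem_singleton.mp hb2).symm
      have ha : a₁ = a₂ := by
        rcases Sym2.eq_iff.mp heq with ⟨_, h⟩ | ⟨hx, hy⟩
        · exact h
        · exfalso
          exact hu_nl1 (hy ▸ List.mem_cons_self (a := a₁) (l := l₁))
      subst ha
      -- now peel off the head edge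
      have hrest1 : s(u, a₁) ∉ (decode l₁ (s.erase u)).toFinset := by
        rw [List.mem_toFinset]
        intro hc
        exact u_not_mem_rest h1 hf1 _ hc (Sym2.mem_iff.mpr (Or.inl rfl))
      have hrest2 : s(u, a₁) ∉ (decode l₂ (s.erase u)).toFinset := by
        rw [List.mem_toFinset]
        intro hc
        apply u_not_mem_rest h2 hf2 _ (by rw [← hu]; exact hc) (Sym2.mem_iff.mpr (Or.inl rfl))
      have hT1 : (decode (a₁ :: l₁) s).toFinset
          = insert (s(u, a₁)) (decode l₁ (s.erase u)).toFinset := by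
        rw [decode_cons hf1, List.toFinset_cons]
      have hT2 : (decode (a₁ :: l₂) s).toFinset
          = insert (s(u, a₁)) (decode l₂ (s.erase u)).toFinset := by
        rw [decode_cons hf2, List.toFinset_cons, ← hu]
      have hTeq : (decode l₁ (s.erase u)).toFinset = (decode l₂ (s.erase u)).toFinset := by
        have := hT
        rw [hT1, hT2] at this
        have h1' := congrArg (fun t => Finset.erase t (s(u, a₁))) this
        simpa [Finset.erase_insert hrest1, Finset.erase_insert hrest2] using h1'
      have hl : l₁ = l₂ := by
        apply ih (inv_erase h1 hf1) ?_ hTeq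
        have := inv_erase h2 hf2
        rwa [← hu] at this
      rw [hl]


section App

variable (n c : ℕ)

lemma inv_univ (f : Fin (n-2) → Fin n) (hn : 2 ≤ n) :
    Inv (List.ofFn f) (Finset.univ : Finset (Fin n)) := by
  constructor
  · simp only [Finset.card_univ, Fintype.card_fin, List.length_ofFn]
    omega
  · intro x _
    exact Finset.mem_univ x

/-- the edge list of the tree decoded from `f` -/
def EL (hn : 2 ≤ n) (f : Fin (n-2) → Fin n) : List (Sym2 (Fin n)) :=
  decode (List.ofFn f) Finset.univ

lemma EL_length (hn : 2 ≤ n) (f : Fin (n-2) → Fin n) : (EL n hn f).length = n - 1 := by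
  rw [EL, length_decode (inv_univ n f hn), List.length_ofFn]
  omega

/-- the forest associated to data `(f, γ)` -/
def Phi (hn : 2 ≤ n) (fg : (Fin (n-2) → Fin n) × (Fin (n-1) → Fin c)) :
    Finset ({ p : Sym2 (Fin n) // ¬ p.IsDiag } × Fin c) :=
  Finset.image (fun i : Fin (n-1) =>
    (⟨(EL n hn fg.1).get (Fin.cast (EL_length n hn fg.1).symm i),
      not_isDiag_of_mem_decode (inv_univ n fg.1 hn) _ (List.get_mem _ _)⟩,
     fg.2 i)) Finset.univ

lemma Phi_image (hn : 2 ≤ n) (fg : (Fin (n-2) → Fin n) × (Fin (n-1) → Fin c)) :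
    (Phi n c hn fg).image (fun x => (x.1 : Sym2 (Fin n))) = (EL n hn fg.1).toFinset := by
  rw [Phi, Finset.image_image]
  ext x
  simp only [Finset.mem_image, Finset.mem_univ, true_and, Function.comp_apply,
    List.mem_toFinset, List.mem_iff_get]
  constructor
  · rintro ⟨i, rfl⟩
    exact ⟨_, rfl⟩
  · rintro ⟨j, rfl⟩
    refine ⟨Fin.cast (EL_length n hn fg.1) j, ?_⟩
    congr 1
  
lemma Phi_injective (hn : 2 ≤ n) : Function.Injective (Phi n c hn) := by
  rintro ⟨f₁, g₁⟩ ⟨f₂, g₂⟩ hΦ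
  have hE : (EL n hn f₁).toFinset = (EL n hn f₂).toFinset := by
    rw [← Phi_image n c hn (f₁, g₁), ← Phi_image n c hn (f₂, g₂), hΦ]
  have hf : f₁ = f₂ := by
    apply List.ofFn_injective
    exact decode_injective (inv_univ n f₁ hn) (inv_univ n f₂ hn) hE
  subst hf
  have hnd : (EL n hn f₁).Nodup := nodup_decode (inv_univ n f₁ hn)
  have hg : g₁ = g₂ := by
    funext i
    have hmem : ((⟨(EL n hn f₁).get (Fin.cast (EL_length n hn f₁).symm i),
        not_isDiag_of_mem_decode (inv_univ n f₁ hn) _ (List.get_mem _ _)⟩ :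
          { p : Sym2 (Fin n) // ¬ p.IsDiag }),
        g₁ i) ∈ Phi n c hn (f₁, g₂) := by
      rw [← hΦ, Phi]
      exact Finset.mem_image_of_mem _ (Finset.mem_univ i)
    rw [Phi, Finset.mem_image] at hmem
    obtain ⟨j, -, hj⟩ := hmem
    have hj1 := congrArg (fun x => (x.1 : Sym2 (Fin n))) hj
    simp only at hj1
    have hget : Fin.cast (EL_length n hn f₁).symm j = Fin.cast (EL_length n hn f₁).symm i :=
      List.nodup_iff_injective_get.mp hnd hj1
    have hji : j = i := Fin.cast_injective _ hget
    have hj2 := congrArg Prod.snd hj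
    simp only at hj2
    rw [← hj2, hji]
  rw [hg]


lemma Phi_isForest (hn : 2 ≤ n) (fg : (Fin (n-2) → Fin n) × (Fin (n-1) → Fin c)) :
    IsForest (fun e => (e.1 : Sym2 (Fin n))) (Phi n c hn fg) := by
  rintro ⟨k, v, e, hv, he, hmem, hε⟩
  have hnd : (EL n hn fg.1).Nodup := nodup_decode (inv_univ n fg.1 hn)
  have hrep : ∀ i, ∃ j : Fin (n-1),
      ((⟨(EL n hn fg.1).get (Fin.cast (EL_length n hn fg.1).symm j),
        not_isDiag_of_mem_decode (inv_univ n fg.1 hn) _ (List.get_mem _ _)⟩ :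
        { p : Sym2 (Fin n) // ¬ p.IsDiag }),
       fg.2 j) = e i := by
    intro i
    have h := hmem i
    rw [Phi, Finset.mem_image] at h
    obtain ⟨j, -, hj⟩ := h
    exact ⟨j, hj⟩
  choose j hj using hrep
  cases k with
  | zero =>
    have h01 : (0 : Fin 2) ≠ 1 := by decide
    have hne : e 0 ≠ e 1 := fun hc => h01 (he hc)
    have hs0 : ((e 0).1.1 : Sym2 (Fin n)) = s(v 0, v 1) := hε 0
    have hs1 : ((e 1).1.1 : Sym2 (Fin n)) = s(v 1, v (1+1)) := hε 1
    have h11 : (1 + 1 : Fin 2) = 0 := by decide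
    rw [h11] at hs1
    have hss : ((e 0).1.1 : Sym2 (Fin n)) = ((e 1).1.1) := by
      rw [hs0, hs1, Sym2.eq_swap]
    have hg0 := congrArg (fun x => (x.1.1 : Sym2 (Fin n))) (hj 0)
    have hg1 := congrArg (fun x => (x.1.1 : Sym2 (Fin n))) (hj 1)
    simp only at hg0 hg1
    have hgets : (EL n hn fg.1).get (Fin.cast (EL_length n hn fg.1).symm (j 0))
        = (EL n hn fg.1).get (Fin.cast (EL_length n hn fg.1).symm (j 1)) := by
      rw [hg0, hg1, hss]
    have hcast := List.nodup_iff_injective_get.mp hnd hgets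
    have hjj : j 0 = j 1 := Fin.cast_injective _ hcast
    apply hne
    rw [← hj 0, ← hj 1, hjj]
  | succ k' =>
    apply decode_acyclic (inv_univ n fg.1 hn) (k := k' + 1) (by omega) v hv
    intro i
    have hεi : ((e i).1.1 : Sym2 (Fin n)) = s(v i, v (i+1)) := hε i
    rw [← hεi, ← hj i]
    exact List.get_mem _ _

end App

end Stmt13X

theorem stmt13 (n c : ℕ) (hn : 2 ≤ n) (hc : 1 ≤ c) :
    c ^ (n - 1) * n ^ (n - 2) ≤ numForests n c := by
  have hinj := Stmt13X.Phi_injective n c hn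
  have hsub : Set.range (Stmt13X.Phi n c hn) ⊆
      {F : Finset ({ p : Sym2 (Fin n) // ¬ p.IsDiag } × Fin c) |
        IsForest (fun e => (e.1 : Sym2 (Fin n))) F} := by
    rintro F ⟨fg, rfl⟩
    exact Stmt13X.Phi_isForest n c hn fg
  have h1 : c ^ (n - 1) * n ^ (n - 2)
      = Nat.card ((Fin (n-2) → Fin n) × (Fin (n-1) → Fin c)) := by
    simp only [Nat.card_eq_fintype_card, Fintype.card_prod, Fintype.card_fun,
      Fintype.card_fin]
    ring
  have h2 : Nat.card ((Fin (n-2) → Fin n) × (Fin (n-1) → Fin c))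
      = (Set.range (Stmt13X.Phi n c hn)).ncard := by
    rw [← Nat.card_coe_set_eq, Nat.card_range_of_injective hinj]
  rw [numForests, h1, h2]
  exact Set.ncard_le_ncard hsub (Set.toFinite _)
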